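/- arXiv:1803.00817 — 4 statements merged into one kernel-verified Lean document; each statement's English description precedes it below -/
import Mathlib

section
/- Small-gain bound: Suppose vectors |y| ∈ ℝ^m, |z|, |v| ∈ ℝ^ℓ, |u| ∈ ℝ^n (all entrywise nonnegative) satisfy |y| ≤ γ_{yu}|u| + γ_{yv}|v|, |z| ≤ γ_{zu}|u| + γ_{zv}|v|, and |v| ≤ γ_ψ|z|, where all gain matrices are entrywise nonnegative and ρ(γ_{zv} γ_ψ) < 1. Then |z| ≤ (I − γ_{zv}γ_ψ)^{-1} γ_{zu} |u| and |y| ≤ [γ_{yu} + γ_{yv} γ_ψ (I − γ_{zv}γ_ψ)^{-1} γ_{zu}] |u| (all inequalities entrywise). -/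
open Matrix Filter Topology Finset

attribute [local instance] Matrix.linftyOpNormedRing Matrix.linftyOpNormedAlgebra

noncomputable def specRad {l : ℕ} (M : Matrix (Fin l) (Fin l) ℝ) : ENNReal :=
  spectralRadius ℂ (M.map (algebraMap ℝ ℂ))

private lemma sg_entry_nnnorm_le {l : ℕ} (M : Matrix (Fin l) (Fin l) ℂ) (i j : Fin l) :
    ‖M i j‖₊ ≤ ‖M‖₊ := by
  rw [Matrix.linfty_opNNNorm_def]
  calc ‖M i j‖₊ ≤ ∑ k, ‖M i k‖₊ :=
        Finset.single_le_sum (f := fun k => ‖M i k‖₊) (fun _ _ => zero_le) (Finset.mem_univ j)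
    _ ≤ _ := Finset.le_sup (f := fun i => ∑ k, ‖M i k‖₊) (Finset.mem_univ i)

private lemma sg_mulVec_mono {p q : ℕ} (M : Matrix (Fin p) (Fin q) ℝ)
    (hM : ∀ i j, 0 ≤ M i j) {x x' : Fin q → ℝ} (h : ∀ j, x j ≤ x' j) :
    ∀ i, M.mulVec x i ≤ M.mulVec x' i := by
  intro i
  simp only [Matrix.mulVec, dotProduct]
  exact Finset.sum_le_sum fun j _ => mul_le_mul_of_nonneg_left (h j) (hM i j)

private lemma sg_mul_nonneg {p q r : ℕ} {M : Matrix (Fin p) (Fin q) ℝ}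
    {N : Matrix (Fin q) (Fin r) ℝ} (hM : ∀ i j, 0 ≤ M i j) (hN : ∀ i j, 0 ≤ N i j) :
    ∀ i j, 0 ≤ (M * N) i j := by
  intro i j
  rw [Matrix.mul_apply]
  exact Finset.sum_nonneg fun k _ => mul_nonneg (hM i k) (hN k j)

private lemma sg_pow_nonneg {p : ℕ} {M : Matrix (Fin p) (Fin p) ℝ}
    (hM : ∀ i j, 0 ≤ M i j) : ∀ N, ∀ i j, 0 ≤ (M ^ N) i j := by
  intro N
  induction N with
  | zero => intro i j; simp [Matrix.one_apply]; split <;> norm_num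
  | succ N ih => rw [pow_succ]; exact sg_mul_nonneg ih hM

private lemma sg_mulVec_nonneg {p q : ℕ} {M : Matrix (Fin p) (Fin q) ℝ}
    (hM : ∀ i j, 0 ≤ M i j) {x : Fin q → ℝ} (hx : ∀ j, 0 ≤ x j) :
    ∀ i, 0 ≤ M.mulVec x i := by
  intro i
  simp only [Matrix.mulVec, dotProduct]
  exact Finset.sum_nonneg fun j _ => mul_nonneg (hM i j) (hx j)

/-- Entries of powers tend to zero when the spectral radius is `< 1`. -/
private lemma sg_pow_tendsto_zero {l : ℕ} (A : Matrix (Fin l) (Fin l) ℝ)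
    (hρ : specRad A < 1) (i j : Fin l) :
    Tendsto (fun N => (A ^ N) i j) atTop (𝓝 0) := by
  haveI : CompleteSpace (Matrix (Fin l) (Fin l) ℂ) := FiniteDimensional.complete ℂ _
  set B := A.map (algebraMap ℝ ℂ) with hB
  have hBpow : ∀ N, B ^ N = (A ^ N).map (algebraMap ℝ ℂ) := by
    intro N
    rw [hB]
    simpa using (map_pow ((algebraMap ℝ ℂ).mapMatrix) A N).symm
  have hgel := spectrum.pow_nnnorm_pow_one_div_tendsto_nhds_spectralRadius B
  obtain ⟨c, hc1, hc2⟩ := exists_between hρ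
  have hev : ∀ᶠ N : ℕ in atTop, ((‖B ^ N‖₊ : ENNReal) ^ (1 / (N:ℝ))) < c :=
    hgel.eventually_lt_const hc1
  -- norm tends to zero in ENNReal
  have hnorm0 : Tendsto (fun N : ℕ => (‖B ^ N‖₊ : ENNReal)) atTop (𝓝 0) := by
    have hcpow : Tendsto (fun N : ℕ => c ^ N) atTop (𝓝 0) :=
      ENNReal.tendsto_pow_atTop_nhds_zero_of_lt_one hc2
    refine tendsto_of_tendsto_of_tendsto_of_le_of_le' tendsto_const_nhds hcpow
      (Eventually.of_forall fun _ => zero_le) ?_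
    filter_upwards [hev, eventually_gt_atTop 0] with N hN hN0
    have hle : ((‖B ^ N‖₊ : ENNReal) ^ (1 / (N:ℝ))) ^ (N:ℝ) ≤ c ^ (N:ℝ) :=
      ENNReal.rpow_le_rpow hN.le (by positivity)
    rw [← ENNReal.rpow_mul, one_div, inv_mul_cancel₀ (by exact_mod_cast hN0.ne' : (N:ℝ) ≠ 0),
      ENNReal.rpow_one, ENNReal.rpow_natCast] at hle
    exact hle
  have hnnorm0 : Tendsto (fun N : ℕ => ‖B ^ N‖) atTop (𝓝 0) := by
    have := (ENNReal.tendsto_toReal ENNReal.zero_ne_top).comp hnorm0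
    simpa [Function.comp_def] using this
  have hentry : ∀ N, |(A ^ N) i j| ≤ ‖B ^ N‖ := by
    intro N
    have h1 : ‖(B ^ N) i j‖ ≤ ‖B ^ N‖ := sg_entry_nnnorm_le (B ^ N) i j
    have h2 : (B ^ N) i j = algebraMap ℝ ℂ ((A ^ N) i j) := by rw [hBpow]; rfl
    rw [h2] at h1
    rwa [show ‖algebraMap ℝ ℂ ((A ^ N) i j)‖ = |(A ^ N) i j| by
      rw [show algebraMap ℝ ℂ ((A ^ N) i j) = ((A ^ N) i j : ℂ) from rfl,
        Complex.norm_real, Real.norm_eq_abs]] at h1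
  have : Tendsto (fun N => |(A ^ N) i j|) atTop (𝓝 0) :=
    squeeze_zero (fun _ => abs_nonneg _) hentry hnnorm0
  exact tendsto_zero_iff_abs_tendsto_zero _ |>.mpr this

theorem small_gain_bound {m n l : ℕ}
    (γyu : Matrix (Fin m) (Fin n) ℝ) (γyv : Matrix (Fin m) (Fin l) ℝ)
    (γzu : Matrix (Fin l) (Fin n) ℝ) (γzv γψ : Matrix (Fin l) (Fin l) ℝ)
    (hyu : ∀ i j, 0 ≤ γyu i j) (hyv : ∀ i j, 0 ≤ γyv i j)
    (hzu : ∀ i j, 0 ≤ γzu i j) (hzv : ∀ i j, 0 ≤ γzv i j)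
    (hψ : ∀ i j, 0 ≤ γψ i j)
    (hρ : specRad (γzv * γψ) < 1)
    (y : Fin m → ℝ) (z v : Fin l → ℝ) (u : Fin n → ℝ)
    (hy0 : ∀ i, 0 ≤ y i) (hz0 : ∀ i, 0 ≤ z i) (hv0 : ∀ i, 0 ≤ v i)
    (hu0 : ∀ i, 0 ≤ u i)
    (hy : ∀ i, y i ≤ (γyu.mulVec u + γyv.mulVec v) i)
    (hz : ∀ i, z i ≤ (γzu.mulVec u + γzv.mulVec v) i)
    (hv : ∀ i, v i ≤ (γψ.mulVec z) i) :
    (∀ i, z i ≤ (((1 - γzv * γψ)⁻¹ * γzu).mulVec u) i) ∧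
    (∀ i, y i ≤ ((γyu + γyv * γψ * (1 - γzv * γψ)⁻¹ * γzu).mulVec u) i) := by
  set A := γzv * γψ with hA
  have hAnn : ∀ i j, 0 ≤ A i j := sg_mul_nonneg hzv hψ
  set b := γzu.mulVec u with hb
  have hbnn : ∀ i, 0 ≤ b i := sg_mulVec_nonneg hzu hu0
  set C := (1 - A)⁻¹ with hC
  -- invertibility
  have hdet : IsUnit (1 - A).det := by
    set B := A.map (algebraMap ℝ ℂ) with hBdef
    have h1 : (1 : ℂ) ∉ spectrum ℂ B := by
      intro hmem
      have hle : (‖(1:ℂ)‖₊ : ENNReal) ≤ spectralRadius ℂ B :=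
        le_iSup₂ (f := fun k (_ : k ∈ spectrum ℂ B) => (‖k‖₊ : ENNReal)) (1:ℂ) hmem
      simp only [nnnorm_one, ENNReal.coe_one] at hle
      exact absurd (lt_of_le_of_lt hle hρ) (lt_irrefl _)
    have hu : IsUnit (1 - B) := by
      have := spectrum.notMem_iff.mp h1
      simpa using this
    have hdetC : IsUnit (1 - B).det := (Matrix.isUnit_iff_isUnit_det _).mp hu
    have heq : (1 - B).det = algebraMap ℝ ℂ (1 - A).det := by
      have h2 : (1 : Matrix (Fin l) (Fin l) ℂ) - B = (1 - A).map (algebraMap ℝ ℂ) := by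
        simp [hBdef, Matrix.map_sub, Matrix.map_one]
      rw [h2]
      exact ((algebraMap ℝ ℂ).map_det (1 - A)).symm
    rw [heq] at hdetC
    refine isUnit_iff_ne_zero.mpr fun h0 => ?_
    rw [h0, map_zero] at hdetC
    exact hdetC.ne_zero rfl
  have hInv : (1 - A) * C = 1 := Matrix.mul_nonsing_inv _ hdet
  -- partial sums
  set S : ℕ → Matrix (Fin l) (Fin l) ℝ := fun N => ∑ k ∈ Finset.range N, A ^ k with hS
  have hInv' : C * (1 - A) = 1 := Matrix.nonsing_inv_mul _ hdet
  have hSid : ∀ N, S N = C - C * A ^ N := by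
    intro N
    have h1 : (1 - A) * S N = 1 - A ^ N := mul_neg_geom_sum A N
    have h2 : C * ((1 - A) * S N) = C * (1 - A ^ N) := by rw [h1]
    rw [← mul_assoc, hInv', one_mul] at h2
    rw [h2, mul_sub, mul_one]
  -- entrywise convergence of partial sums to C
  have hSlim : ∀ i j, Tendsto (fun N => S N i j) atTop (𝓝 (C i j)) := by
    intro i j
    have h0 : Tendsto (fun N => (C * A ^ N) i j) atTop (𝓝 0) := by
      have : ∀ N, (C * A ^ N) i j = ∑ k, C i k * (A ^ N) k j := fun N => rfl
      simp only [this]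
      have := tendsto_finset_sum (Finset.univ : Finset (Fin l))
        (fun k _ => (sg_pow_tendsto_zero A hρ k j).const_mul (C i k))
      simpa using this
    have := Tendsto.sub (tendsto_const_nhds (x := C i j)) h0
    simp only [sub_zero] at this
    refine this.congr fun N => ?_
    rw [hSid N]
    rfl
  -- nonnegativity of S N and of C
  have hSnn : ∀ N i j, 0 ≤ S N i j := by
    intro N i j
    have : S N i j = ∑ k ∈ Finset.range N, (A ^ k) i j := by
      simp [hS, Matrix.sum_apply]
    rw [this]
    exact Finset.sum_nonneg fun k _ => sg_pow_nonneg hAnn k i j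
  have hCnn : ∀ i j, 0 ≤ C i j := fun i j =>
    ge_of_tendsto' (hSlim i j) (fun N => hSnn N i j)
  -- the basic recursion  z ≤ b + A z
  have hzb : ∀ i, z i ≤ b i + A.mulVec z i := by
    intro i
    refine (hz i).trans ?_
    have h1 : γzv.mulVec v i ≤ γzv.mulVec (γψ.mulVec z) i :=
      sg_mulVec_mono γzv hzv hv i
    have h2 : γzv.mulVec (γψ.mulVec z) = A.mulVec z := by
      rw [Matrix.mulVec_mulVec]
    simp only [Pi.add_apply]
    rw [← h2]
    exact add_le_add le_rfl h1
  -- iterate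
  have hkey : ∀ N i, z i ≤ (S N).mulVec b i + ((A ^ N).mulVec z) i := by
    intro N
    induction N with
    | zero =>
      intro i
      simp [hS, Matrix.one_mulVec]
    | succ N ih =>
      intro i
      have step : ((A ^ N).mulVec z) i ≤ ((A ^ N).mulVec b) i + ((A ^ (N+1)).mulVec z) i := by
        have h1 : ((A ^ N).mulVec z) i ≤ ((A ^ N).mulVec (fun j => b j + A.mulVec z j)) i :=
          sg_mulVec_mono _ (sg_pow_nonneg hAnn N) hzb i
        have h2 : (A ^ N).mulVec (fun j => b j + A.mulVec z j)
            = (A ^ N).mulVec b + (A ^ N).mulVec (A.mulVec z) := by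
          rw [← Matrix.mulVec_add]; rfl
        have h3 : (A ^ N).mulVec (A.mulVec z) = (A ^ (N+1)).mulVec z := by
          rw [Matrix.mulVec_mulVec, ← pow_succ]
        rw [h2, h3] at h1
        exact h1
      have hSsucc : (S (N+1)).mulVec b = (S N).mulVec b + (A ^ N).mulVec b := by
        have : S (N+1) = S N + A ^ N := by
          simp [hS, Finset.sum_range_succ]
        rw [this, Matrix.add_mulVec]
      calc z i ≤ (S N).mulVec b i + ((A ^ N).mulVec z) i := ih i
        _ ≤ (S N).mulVec b i + (((A ^ N).mulVec b) i + ((A ^ (N+1)).mulVec z) i) :=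
            add_le_add le_rfl step
        _ = (S (N+1)).mulVec b i + ((A ^ (N+1)).mulVec z) i := by
            rw [hSsucc]; simp [Pi.add_apply]; ring
  -- pass to the limit
  have hzC : ∀ i, z i ≤ (C.mulVec b) i := by
    intro i
    have hlim : Tendsto (fun N => (S N).mulVec b i + ((A ^ N).mulVec z) i) atTop
        (𝓝 ((C.mulVec b) i)) := by
      have h1 : Tendsto (fun N => (S N).mulVec b i) atTop (𝓝 ((C.mulVec b) i)) := by
        have : ∀ N, (S N).mulVec b i = ∑ j, S N i j * b j := fun N => rfl
        simp only [this]
        have := tendsto_finset_sum (Finset.univ : Finset (Fin l))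
          (fun j _ => (hSlim i j).mul_const (b j))
        simpa [Matrix.mulVec, dotProduct] using this
      have h2 : Tendsto (fun N => ((A ^ N).mulVec z) i) atTop (𝓝 0) := by
        have : ∀ N, ((A ^ N).mulVec z) i = ∑ j, (A ^ N) i j * z j := fun N => rfl
        simp only [this]
        have := tendsto_finset_sum (Finset.univ : Finset (Fin l))
          (fun j _ => (sg_pow_tendsto_zero A hρ i j).mul_const (z j))
        simpa using this
      have := h1.add h2
      simpa using this
    exact ge_of_tendsto' hlim (fun N => hkey N i)
  have hz_final : ∀ i, z i ≤ ((C * γzu).mulVec u) i := by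
    intro i
    have : (C * γzu).mulVec u = C.mulVec b := by
      rw [hb, Matrix.mulVec_mulVec]
    rw [this]
    exact hzC i
  refine ⟨hz_final, ?_⟩
  intro i
  refine (hy i).trans ?_
  have h1 : γyv.mulVec v i ≤ (γyv * γψ).mulVec z i := by
    have := sg_mulVec_mono γyv hyv hv i
    rwa [Matrix.mulVec_mulVec] at this
  have h2 : (γyv * γψ).mulVec z i ≤ (γyv * γψ * C * γzu).mulVec u i := by
    have := sg_mulVec_mono (γyv * γψ) (sg_mul_nonneg hyv hψ) hz_final i
    rwa [Matrix.mulVec_mulVec, ← Matrix.mul_assoc] at this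
  have h3 : (γyu + γyv * γψ * C * γzu).mulVec u = γyu.mulVec u + (γyv * γψ * C * γzu).mulVec u :=
    Matrix.add_mulVec _ _ _
  rw [h3]
  simp only [Pi.add_apply]
  exact add_le_add le_rfl (h1.trans h2)
end

section
/- Constrained-input bound: Let γ_{zu} ∈ ℝ^{ℓ×n}, γ_{zv}, γ_ψ ∈ ℝ^{ℓ×ℓ} be entrywise nonnegative, and suppose there exist ū ∈ ℝ^n, z̄ ∈ ℝ^ℓ with ū ≥ 0, z̄ ≥ 0 and γ_{zu} ū < (I − γ_{zv} γ_ψ) z̄ (entrywise strict). Then for any nonnegative vectors |u| ≤ ū, |z|, |v| satisfying |z| ≤ γ_{zu}|u| + γ_{zv}|v| and |v| ≤ γ_ψ |z|, it holds that |z| ≤ z̄ entrywise. -/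
lemma mulVec_mono {l m : ℕ} (M : Matrix (Fin l) (Fin m) ℝ)
    (hM : ∀ i j, 0 ≤ M i j) {x y : Fin m → ℝ} (h : ∀ j, x j ≤ y j) :
    ∀ i, M.mulVec x i ≤ M.mulVec y i := by
  intro i
  simp only [Matrix.mulVec, dotProduct]
  exact Finset.sum_le_sum fun j _ => mul_le_mul_of_nonneg_left (h j) (hM i j)

lemma mulVec_nonneg {l m : ℕ} (M : Matrix (Fin l) (Fin m) ℝ)
    (hM : ∀ i j, 0 ≤ M i j) {x : Fin m → ℝ} (h : ∀ j, 0 ≤ x j) :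
    ∀ i, 0 ≤ M.mulVec x i := by
  intro i
  simp only [Matrix.mulVec, dotProduct]
  exact Finset.sum_nonneg fun j _ => mul_nonneg (hM i j) (h j)

theorem constrained_input_bound {n l : ℕ}
    (γzu : Matrix (Fin l) (Fin n) ℝ) (γzv γψ : Matrix (Fin l) (Fin l) ℝ)
    (hzu : ∀ i j, 0 ≤ γzu i j) (hzv : ∀ i j, 0 ≤ γzv i j)
    (hψ : ∀ i j, 0 ≤ γψ i j)
    (ubar : Fin n → ℝ) (zbar : Fin l → ℝ)
    (hubar : ∀ i, 0 ≤ ubar i) (hzbar : ∀ i, 0 ≤ zbar i)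
    (hcond : ∀ i, (γzu.mulVec ubar) i < ((1 - γzv * γψ).mulVec zbar) i)
    (u : Fin n → ℝ) (z v : Fin l → ℝ)
    (hu0 : ∀ i, 0 ≤ u i) (hz0 : ∀ i, 0 ≤ z i) (hv0 : ∀ i, 0 ≤ v i)
    (hu : ∀ i, u i ≤ ubar i)
    (hz : ∀ i, z i ≤ (γzu.mulVec u + γzv.mulVec v) i)
    (hv : ∀ i, v i ≤ (γψ.mulVec z) i) :
    ∀ i, z i ≤ zbar i := by
  -- rewrite hcond
  set A := γzv * γψ with hA
  have hAnn : ∀ i j, 0 ≤ A i j := by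
    intro i j
    simp only [hA, Matrix.mul_apply]
    exact Finset.sum_nonneg fun k _ => mul_nonneg (hzv i k) (hψ k j)
  have hcond' : ∀ i, γzu.mulVec ubar i < zbar i - A.mulVec zbar i := by
    intro i
    have := hcond i
    rwa [Matrix.sub_mulVec, Matrix.one_mulVec, Pi.sub_apply] at this
  have hAlt : ∀ i, A.mulVec zbar i < zbar i := by
    intro i
    have h1 := hcond' i
    have h2 := mulVec_nonneg γzu hzu hubar i
    linarith
  have hzpos : ∀ i, 0 < zbar i := fun i =>
    lt_of_le_of_lt (mulVec_nonneg A hAnn hzbar i) (hAlt i)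
  cases Nat.eq_zero_or_pos l with
  | inl h => subst h; exact fun i => absurd i.2 (by simp)
  | inr hl =>
    haveI : Nonempty (Fin l) := ⟨⟨0, hl⟩⟩
    obtain ⟨i₀, _, hi₀⟩ := Finset.exists_max_image Finset.univ (fun i => z i / zbar i)
      ⟨Classical.arbitrary (Fin l), Finset.mem_univ _⟩
    set c := z i₀ / zbar i₀ with hc
    have hzc : ∀ j, z j ≤ c * zbar j := by
      intro j
      exact (div_le_iff₀ (hzpos j)).mp (hi₀ j (Finset.mem_univ j))
    intro i
    by_cases hc1 : c ≤ 1
    · exact (hzc i).trans (by nlinarith [hzpos i])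
    · push_neg at hc1
      exfalso
      have hzi₀ : z i₀ = c * zbar i₀ := by
        rw [hc, div_mul_cancel₀ _ (hzpos i₀).ne']
      have h1 : z i₀ ≤ γzu.mulVec ubar i₀ + γzv.mulVec (γψ.mulVec z) i₀ := by
        have := hz i₀
        rw [Pi.add_apply] at this
        have h2 := mulVec_mono γzu hzu hu i₀
        have h3 := mulVec_mono γzv hzv hv i₀
        linarith
      have hzc' : ∀ j, z j ≤ (c • zbar) j := by
        intro j; simpa using hzc j
      have h6 := mulVec_mono γψ hψ hzc'
      have h7 := mulVec_mono γzv hzv h6 i₀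
      have heq : γzv.mulVec (γψ.mulVec (c • zbar)) i₀ = c * A.mulVec zbar i₀ := by
        rw [Matrix.mulVec_smul, Matrix.mulVec_smul, Matrix.mulVec_mulVec]
        simp [hA]
      have h4 : γzv.mulVec (γψ.mulVec z) i₀ ≤ c * A.mulVec zbar i₀ := by
        rw [← heq]; exact h7
      have h8 := hcond' i₀
      have h9 := hAlt i₀
      nlinarith [hzi₀, h1, h4]
end

section
/- For fixed φ* with |φ*| ≤ π/2, the function f(t) = ((t − sin t)/t)·cos|φ*| + ((1 − cos t)/t)·sin|φ*| is monotonically increasing in t on the interval 0 < t ≤ π − |φ*|. -/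
open Real

theorem gain_function_monotone (φ : ℝ) (hφ : |φ| ≤ π / 2) :
    ∀ t₁ t₂ : ℝ, 0 < t₁ → t₁ ≤ t₂ → t₂ ≤ π - |φ| →
      (t₁ - sin t₁) / t₁ * cos |φ| + (1 - cos t₁) / t₁ * sin |φ| ≤
      (t₂ - sin t₂) / t₂ * cos |φ| + (1 - cos t₂) / t₂ * sin |φ| := by
  intro t₁ t₂ ht₁ h12 h2
  set a := |φ| with ha
  have ha0 : 0 ≤ a := abs_nonneg φ
  have hπ : a ≤ π := le_trans hφ (by linarith [pi_pos])
  have ht₂ : 0 < t₂ := lt_of_lt_of_le ht₁ h12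
  have hconv : ConvexOn ℝ (Set.Icc 0 π) (fun x => -sin x) :=
    strictConcaveOn_sin_Icc.concaveOn.neg
  have hmem : a ∈ Set.Icc 0 π := ⟨ha0, hπ⟩
  have hmem1 : a + t₁ ∈ Set.Icc 0 π := ⟨by linarith, by linarith⟩
  have hmem2 : a + t₂ ∈ Set.Icc 0 π := ⟨by linarith, by linarith⟩
  have hkey := hconv.secant_mono hmem hmem1 hmem2
    (by intro h; nlinarith [h]) (by intro h; nlinarith [h]) (by linarith)
  simp only [add_sub_cancel_left] at hkey
  have hkey' : (sin (a + t₂) - sin a) / t₂ ≤ (sin (a + t₁) - sin a) / t₁ := by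
    have := hkey
    rw [div_le_div_iff₀ ht₁ ht₂] at this
    rw [div_le_div_iff₀ ht₂ ht₁]
    nlinarith
  rw [sin_add, sin_add] at hkey'
  have e1 : (t₁ - sin t₁) / t₁ * cos a + (1 - cos t₁) / t₁ * sin a
      = cos a - (sin a * cos t₁ + cos a * sin t₁ - sin a) / t₁ := by
    field_simp; ring
  have e2 : (t₂ - sin t₂) / t₂ * cos a + (1 - cos t₂) / t₂ * sin a
      = cos a - (sin a * cos t₂ + cos a * sin t₂ - sin a) / t₂ := by
    field_simp; ring
  rw [e1, e2]
  linarith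
end

section
/- Sector-bound gain formula: Let |φ*| ≤ π/2 and z̄ > 0 with |φ*| + z̄ ≤ π. Then for all z with 0 < |z| ≤ z̄, |(sin(z + φ*) − sin(φ*))/z − cos(φ*)| ≤ cos|φ*| − (sin(|φ*| + z̄) − sin|φ*|)/z̄. -/
open Real Set

private lemma mono_help {f f' : ℝ → ℝ} {a b : ℝ}
    (hd : ∀ x, HasDerivAt f (f' x) x)
    (h0 : ∀ x ∈ Set.Ioo a b, 0 ≤ f' x) : MonotoneOn f (Set.Icc a b) := by
  apply monotoneOn_of_deriv_nonneg (convex_Icc a b)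
  · exact fun x _ => (hd x).differentiableAt.continuousAt.continuousWithinAt
  · intro x hx
    exact (hd x).differentiableAt.differentiableWithinAt
  · intro x hx
    rw [interior_Icc] at hx
    rw [(hd x).deriv]
    exact h0 x hx

private lemma aux (φ zbar z : ℝ)
    (hφ0 : 0 ≤ φ) (hφ : φ ≤ π / 2) (hzbar : 0 < zbar) (hsum : φ + zbar ≤ π)
    (hz0 : 0 < |z|) (hz : |z| ≤ zbar) :
    |(sin (z + φ) - sin φ) / z - cos φ| ≤
      cos φ - (sin (φ + zbar) - sin φ) / zbar := by
  set F : ℝ → ℝ := fun x => cos φ * x - sin (x + φ) + sin φ with hFdef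
  set G : ℝ → ℝ := fun x => cos φ * x + sin (φ - x) - sin φ with hGdef
  have hcφ : 0 ≤ cos φ := Real.cos_nonneg_of_mem_Icc ⟨by linarith [Real.pi_pos], hφ⟩
  -- derivative of F
  have hF : ∀ x : ℝ, HasDerivAt F (cos φ - cos (x + φ)) x := by
    intro x
    have h1 : HasDerivAt (fun x : ℝ => x + φ) 1 x := (hasDerivAt_id x).add_const φ
    have h2 : HasDerivAt (fun x : ℝ => sin (x + φ)) (cos (x + φ) * 1) x :=
      (Real.hasDerivAt_sin _).comp x h1
    have h3 : HasDerivAt (fun x : ℝ => cos φ * x) (cos φ) x := by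
      simpa using (hasDerivAt_id x).const_mul (cos φ)
    exact ((h3.sub h2).add_const (sin φ)).congr_deriv (by ring)
  have hG : ∀ x : ℝ, HasDerivAt G (cos φ - cos (φ - x)) x := by
    intro x
    have h1 : HasDerivAt (fun x : ℝ => φ - x) (-1) x := by
      simpa using (hasDerivAt_id x).const_sub φ
    have h2 : HasDerivAt (fun x : ℝ => sin (φ - x)) (cos (φ - x) * (-1)) x :=
      (Real.hasDerivAt_sin _).comp x h1
    have h3 : HasDerivAt (fun x : ℝ => cos φ * x) (cos φ) x := by
      simpa using (hasDerivAt_id x).const_mul (cos φ)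
    have := (h3.add h2).sub_const (sin φ)
    exact this.congr_deriv (by ring)
  -- cos (x+φ) ≤ cos φ on [0, zbar]
  have hcos_le : ∀ x ∈ Set.Icc (0:ℝ) zbar, cos (x + φ) ≤ cos φ := by
    intro x hx
    exact Real.cos_le_cos_of_nonneg_of_le_pi hφ0 (by linarith [hx.2]) (by linarith [hx.1])
  -- F monotone, F 0 = 0
  have hF0 : F 0 = 0 := by simp [hFdef]
  have hG0 : G 0 = 0 := by simp [hGdef]
  have hF_mono : MonotoneOn F (Set.Icc 0 zbar) :=
    mono_help hF (fun x hx => by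
      have := hcos_le x ⟨le_of_lt hx.1, le_of_lt hx.2⟩; linarith)
  have hF_nonneg : ∀ x ∈ Set.Icc (0:ℝ) zbar, 0 ≤ F x := by
    intro x hx
    have := hF_mono (Set.left_mem_Icc.2 (le_of_lt hzbar)) hx hx.1
    rwa [hF0] at this
  -- F - G monotone
  have hFG_mono : MonotoneOn (fun x => F x - G x) (Set.Icc 0 zbar) := by
    apply mono_help (f' := fun x => (cos φ - cos (x + φ)) - (cos φ - cos (φ - x)))
      (fun x => (hF x).sub (hG x))
    intro x hx
    have h1 : cos (x + φ) ≤ cos (φ - x) := by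
      rw [← Real.cos_abs (φ - x)]
      apply Real.cos_le_cos_of_nonneg_of_le_pi (abs_nonneg _) (by linarith [hx.2])
      calc |φ - x| ≤ |φ| + |x| := abs_sub _ _
        _ = φ + x := by rw [abs_of_nonneg hφ0, abs_of_nonneg (le_of_lt hx.1)]
        _ = x + φ := by ring
    linarith
  -- F + G monotone
  have hFpG_mono : MonotoneOn (fun x => F x + G x) (Set.Icc 0 zbar) := by
    apply mono_help (f' := fun x => (cos φ - cos (x + φ)) + (cos φ - cos (φ - x)))
      (fun x => (hF x).add (hG x))
    intro x hx
    have hid : cos (φ - x) + cos (x + φ) = 2 * cos φ * cos x := by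
      rw [Real.cos_sub, Real.cos_add]; ring
    have hcx : cos x ≤ 1 := Real.cos_le_one x
    nlinarith
  have habsG : ∀ x ∈ Set.Icc (0:ℝ) zbar, |G x| ≤ F x := by
    intro x hx
    have h1 := hFG_mono (Set.left_mem_Icc.2 (le_of_lt hzbar)) hx hx.1
    have h2 := hFpG_mono (Set.left_mem_Icc.2 (le_of_lt hzbar)) hx hx.1
    have h1' : F 0 - G 0 ≤ F x - G x := h1
    have h2' : F 0 + G 0 ≤ F x + G x := h2
    rw [hF0, hG0] at h1' h2'
    rw [abs_le]; constructor <;> linarith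
  -- K x = x * F' x - F x ≥ 0
  have hK : ∀ x : ℝ, HasDerivAt (fun x => x * (cos φ - cos (x + φ)) - F x)
      (x * sin (x + φ)) x := by
    intro x
    have h1 : HasDerivAt (fun x : ℝ => x + φ) 1 x := (hasDerivAt_id x).add_const φ
    have h2 : HasDerivAt (fun x : ℝ => cos (x + φ)) (-sin (x + φ) * 1) x :=
      (Real.hasDerivAt_cos _).comp x h1
    have h3 : HasDerivAt (fun x : ℝ => cos φ - cos (x + φ)) (0 - (-sin (x + φ) * 1)) x :=
      (hasDerivAt_const x (cos φ)).sub h2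
    have h4 := ((hasDerivAt_id x).mul h3).sub (hF x)
    exact h4.congr_deriv (by simp only [id]; ring)
  have hK_mono : MonotoneOn (fun x => x * (cos φ - cos (x + φ)) - F x) (Set.Icc 0 zbar) := by
    apply mono_help hK
    intro x hx
    have hs : 0 ≤ sin (x + φ) :=
      Real.sin_nonneg_of_nonneg_of_le_pi (by linarith [hx.1]) (by linarith [hx.2])
    exact mul_nonneg (le_of_lt hx.1) hs
  have hK_nonneg : ∀ x ∈ Set.Icc (0:ℝ) zbar, 0 ≤ x * (cos φ - cos (x + φ)) - F x := by
    intro x hx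
    have h' : 0 * (cos φ - cos (0 + φ)) - F 0 ≤ x * (cos φ - cos (x + φ)) - F x :=
      hK_mono (Set.left_mem_Icc.2 (le_of_lt hzbar)) hx hx.1
    rw [hF0] at h'
    linarith
  -- slope monotone: for 0 < a ≤ zbar, F a / a ≤ F zbar / zbar
  have hslope : ∀ a : ℝ, 0 < a → a ≤ zbar → F a / a ≤ F zbar / zbar := by
    intro a ha hab
    have hS_mono : MonotoneOn (fun x => F x / x) (Set.Icc a zbar) := by
      apply monotoneOn_of_deriv_nonneg (convex_Icc a zbar)
      · intro x hx
        have hx0 : x ≠ 0 := ne_of_gt (lt_of_lt_of_le ha hx.1)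
        exact ((hF x).differentiableAt.continuousAt.div continuousAt_id hx0).continuousWithinAt
      · intro x hx
        rw [interior_Icc] at hx
        have hx0 : x ≠ 0 := ne_of_gt (lt_of_lt_of_le ha (le_of_lt hx.1))
        exact (((hF x).div (hasDerivAt_id x) hx0)).differentiableAt.differentiableWithinAt
      · intro x hx
        rw [interior_Icc] at hx
        have hx0 : x ≠ 0 := ne_of_gt (lt_of_lt_of_le ha (le_of_lt hx.1))
        rw [HasDerivAt.deriv (f := fun x => F x / x) ((hF x).div (hasDerivAt_id' x) hx0)]
        have hKx := hK_nonneg x ⟨le_of_lt (lt_of_lt_of_le ha (le_of_lt hx.1)), le_of_lt hx.2⟩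
        apply div_nonneg _ (sq_nonneg x)
        nlinarith [hKx]
    exact hS_mono (Set.left_mem_Icc.2 hab) (Set.right_mem_Icc.2 hab) hab
  have hRHS : cos φ - (sin (φ + zbar) - sin φ) / zbar = F zbar / zbar := by
    have hc : sin (zbar + φ) = sin (φ + zbar) := by rw [add_comm]
    simp only [hFdef, hc]
    field_simp
    ring
  rw [hRHS]
  rcases lt_or_gt_of_ne (fun h => by simp [h] at hz0 : z ≠ 0) with hzneg | hzpos
  · -- z < 0
    set s := -z with hs
    have hspos : 0 < s := by simpa [hs] using hzneg
    have hsle : s ≤ zbar := by rwa [abs_of_neg hzneg] at hz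
    have hmem : s ∈ Set.Icc (0:ℝ) zbar := ⟨le_of_lt hspos, hsle⟩
    have heq : (sin (z + φ) - sin φ) / z - cos φ = -(G s) / s := by
      have hzne : z ≠ 0 := ne_of_lt hzneg
      have hc : sin (φ - s) = sin (z + φ) := by rw [hs]; ring_nf
      simp only [hGdef, hc]
      field_simp [hzne]
      ring
    rw [heq]
    have h1 : |(-(G s)) / s| = |G s| / s := by
      rw [abs_div, abs_neg, abs_of_pos hspos]
    rw [h1]
    calc |G s| / s ≤ F s / s := by gcongr; exact habsG s hmem
      _ ≤ F zbar / zbar := hslope s hspos hsle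
  · -- z > 0
    have hzle : z ≤ zbar := by rwa [abs_of_pos hzpos] at hz
    have heq : (sin (z + φ) - sin φ) / z - cos φ = -(F z) / z := by
      field_simp [hFdef]
      ring
    rw [heq]
    have h1 : |(-(F z)) / z| = F z / z := by
      rw [abs_div, abs_neg, abs_of_pos hzpos,
        abs_of_nonneg (hF_nonneg z ⟨le_of_lt hzpos, hzle⟩)]
    rw [h1]
    exact hslope z hzpos hzle

theorem sector_bound_gain_formula (φ zbar z : ℝ)
    (hφ : |φ| ≤ π / 2) (hzbar : 0 < zbar) (hsum : |φ| + zbar ≤ π)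
    (hz0 : 0 < |z|) (hz : |z| ≤ zbar) :
    |(sin (z + φ) - sin φ) / z - cos φ| ≤
      cos |φ| - (sin (|φ| + zbar) - sin |φ|) / zbar := by
  rcases le_or_gt 0 φ with h | h
  · rw [abs_of_nonneg h] at *
    exact aux φ zbar z h hφ hzbar hsum hz0 hz
  · rw [abs_of_neg h] at *
    have := aux (-φ) zbar (-z) (by linarith) hφ hzbar hsum (by rwa [abs_neg]) (by rwa [abs_neg])
    have heq : (sin (-z + -φ) - sin (-φ)) / (-z) - cos (-φ)
        = (sin (z + φ) - sin φ) / z - cos φ := by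
      rw [show -z + -φ = -(z + φ) by ring, Real.sin_neg, Real.sin_neg, Real.cos_neg,
        show -sin (z + φ) - -sin φ = -(sin (z + φ) - sin φ) by ring, neg_div_neg_eq]
    rwa [heq] at this
end
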